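/- Let 0 < b ≤ ∞ and let T be a continuous strictly increasing real-valued function on [0, b) with T([0, b)) = [c, b) for some c > 0 and T(x) > x for all 0 ≤ x < b. Then there exists a solution a : [0, b) → ℝ of FET(1), i.e. a(T(x)) = a(x) + 1 whenever x and T(x) lie in [0, b). Moreover, there is a unique such solution with prescribed values on [0, T(0)); and if the prescribed values are continuous on [0, T(0)) and satisfy lim_{x → T(0)⁻} a(x) = a(0) + 1, then the solution a is continuous on [0, b). -/

import Mathlib

open Set Filter


-- glue continuity on two adjacent closed intervals
lemma glue_Icc {f : ℝ → ℝ} {a b c : ℝ} (hab : a ≤ b) (hbc : b ≤ c)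
    (h1 : ContinuousOn f (Icc a b)) (h2 : ContinuousOn f (Icc b c)) :
    ContinuousOn f (Icc a c) := by
  rw [← Icc_union_Icc_eq_Icc hab hbc]
  intro x hx
  apply ContinuousWithinAt.union
  · by_cases h : x ∈ Icc a b
    · exact h1 x h
    · exact continuousWithinAt_of_notMem_closure (by rwa [isClosed_Icc.closure_eq])
  · by_cases h : x ∈ Icc b c
    · exact h2 x h
    · exact continuousWithinAt_of_notMem_closure (by rwa [isClosed_Icc.closure_eq])

lemma mono_surj_contOn {g : ℝ → ℝ} {p q : ℝ} (hpq : p ≤ q)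
    (hm : StrictMonoOn g (Icc p q))
    (hsur : Icc (g p) (g q) ⊆ g '' (Icc p q)) :
    ContinuousOn g (Icc p q) := by
  intro x hx
  have hx1 := hx.1; have hx2 := hx.2
  have hps : p ∈ Icc p q := left_mem_Icc.2 hpq
  have hqs : q ∈ Icc p q := right_mem_Icc.2 hpq
  have hcover : Icc p q ⊆ Icc p x ∪ Icc x q := fun y hy =>
    (le_or_gt y x).imp (fun h => ⟨hy.1, h⟩) (fun h => ⟨h.le, hy.2⟩)
  have hleft : ContinuousWithinAt g (Icc p x) x := by
    rcases eq_or_lt_of_le hx1 with h | h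
    · rw [← h, Icc_self]
      exact continuousWithinAt_singleton
    · refine ContinuousWithinAt.mono ?_ Icc_subset_Iic_self
      apply hm.continuousWithinAt_left_of_image_mem_nhdsWithin
      · exact mem_of_superset (Ioc_mem_nhdsLE_of_mem ⟨h, le_refl x⟩)
          (fun y hy => ⟨hy.1.le, hy.2.trans hx2⟩)
      · have hgpx : g p < g x := hm hps hx h
        exact mem_of_superset (Ioc_mem_nhdsLE_of_mem ⟨hgpx, le_refl (g x)⟩)
          (fun y hy => hsur ⟨hy.1.le, hy.2.trans (hm.le_iff_le hx hqs |>.2 hx2)⟩)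
  have hright : ContinuousWithinAt g (Icc x q) x := by
    rcases eq_or_lt_of_le hx2 with h | h
    · rw [h, Icc_self]
      exact continuousWithinAt_singleton
    · refine ContinuousWithinAt.mono ?_ Icc_subset_Ici_self
      apply hm.continuousWithinAt_right_of_image_mem_nhdsWithin
      · exact mem_of_superset (Ico_mem_nhdsGE_of_mem ⟨le_refl x, h⟩)
          (fun y hy => ⟨hx1.trans hy.1, hy.2.le⟩)
      · have hgxq : g x < g q := hm hx hqs h
        exact mem_of_superset (Ico_mem_nhdsGE_of_mem ⟨le_refl (g x), hgxq⟩)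
          (fun y hy => hsur ⟨(hm.le_iff_le hps hx |>.2 hx1).trans hy.1, hy.2.le⟩)
  exact (hleft.union hright).mono hcover

/-- Let `0 < b ≤ ∞` (b an extended real), and let `T` be continuous, strictly
increasing on `I = [0, b)` with `T(I) = [c, b)` for some `c > 0`, and `T x > x` on `I`.
Then FET(1) has a solution on `I`; the solution with prescribed values `a₀` on `[0, T 0)` is
unique; and if `a₀` is continuous on `[0, T 0)` with `lim_{x → T(0)⁻} a₀ x = a₀ 0 + 1`, then
that solution is continuous on `I`. -/
theorem stmt9 (b : EReal) (hb : 0 < b)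
    (I : Set ℝ) (hI : I = {x : ℝ | 0 ≤ x ∧ (x : EReal) < b})
    (T : ℝ → ℝ) (hcont : ContinuousOn T I) (hmono : StrictMonoOn T I)
    (c : ℝ) (hc : 0 < c) (himg : T '' I = {x : ℝ | c ≤ x ∧ (x : EReal) < b})
    (hgt : ∀ x ∈ I, T x > x) :
    (∃ a : ℝ → ℝ, ∀ x ∈ I, T x ∈ I → a (T x) = a x + 1) ∧
      (∀ a₀ : ℝ → ℝ,
        (∃ a : ℝ → ℝ, (∀ x ∈ I, T x ∈ I → a (T x) = a x + 1) ∧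
          (∀ x ∈ Ico 0 (T 0), a x = a₀ x)) ∧
        (∀ a a' : ℝ → ℝ,
          (∀ x ∈ I, T x ∈ I → a (T x) = a x + 1) → (∀ x ∈ Ico 0 (T 0), a x = a₀ x) →
          (∀ x ∈ I, T x ∈ I → a' (T x) = a' x + 1) → (∀ x ∈ Ico 0 (T 0), a' x = a₀ x) →
          EqOn a a' I) ∧
        (ContinuousOn a₀ (Ico 0 (T 0)) →
          Tendsto a₀ (nhdsWithin (T 0) (Iio (T 0))) (nhds (a₀ 0 + 1)) →
          ∀ a : ℝ → ℝ, (∀ x ∈ I, T x ∈ I → a (T x) = a x + 1) →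
            (∀ x ∈ Ico 0 (T 0), a x = a₀ x) → ContinuousOn a I)) := by
  classical
  subst hI
  set I : Set ℝ := {x : ℝ | 0 ≤ x ∧ (x : EReal) < b} with hIdef
  have hmemI : ∀ x : ℝ, x ∈ I ↔ 0 ≤ x ∧ (x : EReal) < b := fun x => Iff.rfl
  have h0I : (0 : ℝ) ∈ I := ⟨le_refl 0, by exact_mod_cast hb⟩
  have hTmem : ∀ x ∈ I, T x ∈ I ∧ c ≤ T x := by
    intro x hx
    have : T x ∈ T '' I := mem_image_of_mem T hx
    rw [himg] at this
    exact ⟨⟨hc.le.trans this.1, this.2⟩, this.1⟩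
  have hTI : ∀ x ∈ I, T x ∈ I := fun x hx => (hTmem x hx).1
  -- iterates
  set s : ℕ → ℝ := fun n => T^[n] 0 with hsdef
  have hs0 : s 0 = 0 := rfl
  have hssucc : ∀ n, s (n + 1) = T (s n) := fun n => Function.iterate_succ_apply' T n 0
  have hsI : ∀ n, s n ∈ I := by
    intro n; induction n with
    | zero => exact h0I
    | succ n ih => rw [hssucc]; exact hTI _ ih
  have hsmono : StrictMono s :=
    strictMono_nat_of_lt_succ (fun n => by rw [hssucc]; exact hgt _ (hsI n))
  have hcb : (c : EReal) < b := by
    have : T 0 ∈ T '' I := mem_image_of_mem T h0I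
    rw [himg] at this
    exact lt_of_le_of_lt (EReal.coe_le_coe_iff.2 this.1) this.2
  have hT0c : T 0 = c := by
    obtain ⟨z, hzI, hz⟩ : c ∈ T '' I := by rw [himg]; exact ⟨le_refl c, hcb⟩
    refine le_antisymm ?_ (hTmem 0 h0I).2
    calc T 0 ≤ T z := hmono.monotoneOn h0I hzI hzI.1
    _ = c := hz
  have hs1 : s 1 = T 0 := by rw [hssucc, hs0]
  have hsub : Ico 0 (T 0) ⊆ I := by
    intro x hx
    refine ⟨hx.1, lt_of_lt_of_le (EReal.coe_lt_coe_iff.2 hx.2) ?_⟩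
    rw [hT0c]; exact hcb.le
  -- covering
  have hcover : ∀ x ∈ I, ∃ n, x < s (n + 1) := by
    intro x hx
    by_contra h
    push_neg at h
    have hbdd : BddAbove (range s) := by
      refine ⟨x, ?_⟩
      rintro _ ⟨n, rfl⟩
      cases n with
      | zero => rw [hs0]; exact hx.1
      | succ n => exact h n
    have hL : Tendsto s atTop (nhds (⨆ n, s n)) :=
      tendsto_atTop_ciSup hsmono.monotone hbdd
    set L := ⨆ n, s n with hLdef
    have hLx : L ≤ x := ciSup_le (fun n => by
      cases n with
      | zero => rw [hs0]; exact hx.1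
      | succ n => exact h n)
    have hLI : L ∈ I := by
      refine ⟨?_, lt_of_le_of_lt (EReal.coe_le_coe_iff.2 hLx) hx.2⟩
      calc (0:ℝ) = s 0 := hs0.symm
      _ ≤ L := le_ciSup hbdd 0
    have hLs : Tendsto s atTop (nhdsWithin L I) :=
      tendsto_nhdsWithin_of_tendsto_nhds_of_eventually_within s hL
        (Eventually.of_forall hsI)
    have h1 : Tendsto (fun n => T (s n)) atTop (nhds (T L)) :=
      (hcont L hLI).tendsto.comp hLs
    have h2 : Tendsto (fun n => T (s n)) atTop (nhds L) := by
      have h3 := hL.comp (tendsto_add_atTop_nat 1)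
      have : (fun n => T (s n)) = s ∘ (fun n => n + 1) := by
        funext n; simp [Function.comp, hssucc]
      rwa [this]
    have : T L = L := tendsto_nhds_unique h1 h2
    exact absurd this (ne_of_gt (hgt L hLI))
  -- the index function
  set N : ℝ → ℕ := fun x => sInf {n | x < s (n + 1)} with hNdef
  have hNle : ∀ x m, x < s (m + 1) → N x ≤ m := fun x m h => Nat.sInf_le h
  have hNmem : ∀ x, (∃ n, x < s (n + 1)) → x < s (N x + 1) := fun x hx => Nat.sInf_mem hx
  have hNlt : ∀ x ∈ I, x < s (N x + 1) := fun x hx => hNmem x (hcover x hx)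
  have hNge : ∀ x, 0 ≤ x → s (N x) ≤ x := by
    intro x hx0
    rcases h : N x with _ | m
    · rw [hs0]; exact hx0
    · by_contra hlt
      push_neg at hlt
      have := hNle x m hlt
      omega
  have hNuniq : ∀ x m, s m ≤ x → x < s (m + 1) → N x = m := by
    intro x m h1 h2
    have hle : N x ≤ m := hNle x m h2
    have hxlt : x < s (N x + 1) := hNmem x ⟨m, h2⟩
    have hkey : s m < s (N x + 1) := lt_of_le_of_lt h1 hxlt
    have hkey2 := hsmono.lt_iff_lt.1 hkey
    exact le_antisymm hle (Nat.lt_succ_iff.mp hkey2)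
  -- inverse function
  set g : ℝ → ℝ := fun y => if h : ∃ x, x ∈ I ∧ T x = y then h.choose else 0 with hgdef
  have hgspec : ∀ y : ℝ, c ≤ y → (y : EReal) < b → g y ∈ I ∧ T (g y) = y := by
    intro y h1 h2
    have hex : ∃ x, x ∈ I ∧ T x = y := by
      have : y ∈ T '' I := by rw [himg]; exact ⟨h1, h2⟩
      obtain ⟨x, hx, hxy⟩ := this
      exact ⟨x, hx, hxy⟩
    rw [hgdef]
    simp only [dif_pos hex]
    exact ⟨hex.choose_spec.1, hex.choose_spec.2⟩
  have hgT : ∀ x ∈ I, g (T x) = x := by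
    intro x hx
    have h1 := (hTmem x hx).2
    have h2 := (hTI x hx).2
    obtain ⟨hgI, hgTx⟩ := hgspec (T x) h1 h2
    exact hmono.injOn hgI hx hgTx
  -- membership of Icc-points in I
  have hIccI : ∀ m, ∀ x, 0 ≤ x → x ≤ s m → x ∈ I := by
    intro m x h0 hm
    exact ⟨h0, lt_of_le_of_lt (EReal.coe_le_coe_iff.2 hm) (hsI m).2⟩
  -- key iterate lemma
  have hiter : ∀ k m, ∀ x ∈ I, s (k + m) ≤ x → x < s (k + m + 1) →
      g^[k] x ∈ I ∧ s m ≤ g^[k] x ∧ g^[k] x < s (m + 1) := by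
    intro k
    induction k with
    | zero =>
      intro m x hx h1 h2
      simp only [Nat.zero_add] at h1 h2
      simpa using ⟨hx, h1, h2⟩
    | succ k ih =>
      intro m x hx h1 h2
      rw [show k + 1 + m = k + m + 1 from by omega] at h1
      rw [show k + 1 + m + 1 = k + m + 1 + 1 from by omega] at h2
      have hcx : c ≤ x := by
        calc c = s 1 := by rw [hs1, hT0c]
        _ ≤ s (k + m + 1) := hsmono.monotone (by omega)
        _ ≤ x := h1
      obtain ⟨hgI, hgTx⟩ := hgspec x hcx hx.2
      have hb1 : s (k + m) ≤ g x := by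
        have : T (s (k + m)) ≤ T (g x) := by rw [hgTx, ← hssucc]; exact h1
        exact (hmono.le_iff_le (hsI _) hgI).1 this
      have hb2 : g x < s (k + m + 1) := by
        have : T (g x) < T (s (k + m + 1)) := by rw [hgTx, ← hssucc]; exact h2
        exact (hmono.lt_iff_lt hgI (hsI _)).1 this
      have := ih m (g x) hgI hb1 hb2
      rwa [Function.iterate_succ_apply]
  have hiter0 : ∀ x ∈ I, g^[N x] x ∈ Ico 0 (T 0) := by
    intro x hx
    have := hiter (N x) 0 x hx (by simpa using hNge x hx.1) (by simpa using hNlt x hx)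
    refine ⟨by rw [← hs0]; exact this.2.1, by rw [← hs1]; exact this.2.2⟩
  -- shift of index under T
  have hNT : ∀ x ∈ I, N (T x) = N x + 1 := by
    intro x hx
    refine hNuniq (T x) (N x + 1) ?_ ?_
    · rw [hssucc]
      exact hmono.monotoneOn (hsI _) hx (hNge x hx.1)
    · rw [hssucc]
      exact hmono hx (hsI _) (hNlt x hx)
  -- uniqueness (generic)
  have huniq : ∀ (a₀ a a' : ℝ → ℝ),
      (∀ x ∈ I, T x ∈ I → a (T x) = a x + 1) → (∀ x ∈ Ico 0 (T 0), a x = a₀ x) →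
      (∀ x ∈ I, T x ∈ I → a' (T x) = a' x + 1) → (∀ x ∈ Ico 0 (T 0), a' x = a₀ x) →
      EqOn a a' I := by
    intro a₀ a a' ha hab ha' hab'
    have key : ∀ n, ∀ x ∈ I, x < s (n + 1) → a x = a' x := by
      intro n
      induction n with
      | zero =>
        intro x hx hlt
        rw [hs1] at hlt
        rw [hab x ⟨hx.1, hlt⟩, hab' x ⟨hx.1, hlt⟩]
      | succ n ih =>
        intro x hx hlt
        rcases lt_or_ge x (s 1) with h | h
        · rw [hs1] at h
          rw [hab x ⟨hx.1, h⟩, hab' x ⟨hx.1, h⟩]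
        · have hcx : c ≤ x := by rw [← hT0c, ← hs1]; exact h
          obtain ⟨hgI, hgTx⟩ := hgspec x hcx hx.2
          have hylt : g x < s (n + 1) := by
            have : T (g x) < T (s (n + 1)) := by rw [hgTx, ← hssucc]; exact hlt
            exact (hmono.lt_iff_lt hgI (hsI _)).1 this
          have hTyI : T (g x) ∈ I := by rw [hgTx]; exact hx
          calc a x = a (T (g x)) := by rw [hgTx]
          _ = a (g x) + 1 := ha (g x) hgI hTyI
          _ = a' (g x) + 1 := by rw [ih (g x) hgI hylt]
          _ = a' (T (g x)) := (ha' (g x) hgI hTyI).symm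
          _ = a' x := by rw [hgTx]
    intro x hx
    obtain ⟨n, hn⟩ := hcover x hx
    exact key n x hx hn
  -- canonical solution for given a₀
  have hexists : ∀ a₀ : ℝ → ℝ, ∃ a : ℝ → ℝ,
      (∀ x ∈ I, T x ∈ I → a (T x) = a x + 1) ∧ (∀ x ∈ Ico 0 (T 0), a x = a₀ x) := by
    intro a₀
    refine ⟨fun x => a₀ (g^[N x] x) + N x, ?_, ?_⟩
    · intro x hx hTx
      have hNTx := hNT x hx
      have hg1 : g^[N (T x)] (T x) = g^[N x] x := by
        rw [hNTx, Function.iterate_succ_apply, hgT x hx]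
      simp only
      rw [hg1, hNTx]
      push_cast
      ring
    · intro x hx
      have hxI : x ∈ I := hsub hx
      have hN0 : N x = 0 := by
        refine hNuniq x 0 ?_ ?_
        · rw [hs0]; exact hx.1
        · rw [hs1]; exact hx.2
      simp only [hN0, Function.iterate_zero, id_eq, Nat.cast_zero, add_zero]
  -- continuity
  have hcontA : ∀ a₀ : ℝ → ℝ, ContinuousOn a₀ (Ico 0 (T 0)) →
      Tendsto a₀ (nhdsWithin (T 0) (Iio (T 0))) (nhds (a₀ 0 + 1)) →
      ∀ a : ℝ → ℝ, (∀ x ∈ I, T x ∈ I → a (T x) = a x + 1) →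
        (∀ x ∈ Ico 0 (T 0), a x = a₀ x) → ContinuousOn a I := by
    intro a₀ hc₀ hlim a ha hbd
    have hT0pos : 0 < T 0 := by rw [hT0c]; exact hc
    have hbase : ContinuousOn a (Icc 0 (s 1)) := by
      rw [hs1]
      intro x hx
      rcases lt_or_eq_of_le hx.2 with h | h
      · have hxI : x ∈ Ico 0 (T 0) := ⟨hx.1, h⟩
        have h1 : ContinuousWithinAt a (Ico 0 (T 0)) x :=
          (hc₀ x hxI).congr (fun y hy => hbd y hy) (hbd x hxI)
        have heq : Icc 0 (T 0) ∩ Iio (T 0) = Ico 0 (T 0) := by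
          ext y
          exact ⟨fun hy => ⟨hy.1.1, hy.2⟩, fun hy => ⟨⟨hy.1, hy.2.le⟩, hy.2⟩⟩
        rw [← heq] at h1
        exact (continuousWithinAt_inter (Iio_mem_nhds h)).1 h1
      · subst h
        have haT0 : a (T 0) = a₀ 0 + 1 := by
          rw [ha 0 h0I (hTI 0 h0I), hbd 0 ⟨le_refl 0, hT0pos⟩]
        have hle : nhdsWithin (T 0) (Icc 0 (T 0)) ≤
            nhdsWithin (T 0) (Iio (T 0)) ⊔ pure (T 0) := by
          calc nhdsWithin (T 0) (Icc 0 (T 0))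
              ≤ nhdsWithin (T 0) (Iio (T 0) ∪ {T 0}) :=
            nhdsWithin_mono _ (fun y hy => (lt_or_eq_of_le hy.2).imp id (fun h => h))
          _ = nhdsWithin (T 0) (Iio (T 0)) ⊔ nhdsWithin (T 0) {T 0} :=
            nhdsWithin_union _ _ _
          _ = nhdsWithin (T 0) (Iio (T 0)) ⊔ pure (T 0) := by rw [nhdsWithin_singleton]
        show Tendsto a _ _
        rw [haT0]
        refine Tendsto.mono_left ?_ hle
        rw [tendsto_sup]
        constructor
        · have hev : ∀ᶠ y in nhdsWithin (T 0) (Iio (T 0)), a₀ y = a y := by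
            filter_upwards [Ioo_mem_nhdsLT_of_mem ⟨hT0pos, le_refl (T 0)⟩] with y hy
            exact (hbd y ⟨hy.1.le, hy.2⟩).symm
          exact hlim.congr' hev
        · rw [← haT0]
          exact tendsto_pure_nhds a (T 0)
    have hstep : ∀ n, ContinuousOn a (Icc 0 (s (n + 1))) := by
      intro n
      induction n with
      | zero => exact hbase
      | succ n ih =>
        have hpq : s (n + 1) ≤ s (n + 2) := hsmono.monotone (by omega)
        have hIccsub : ∀ y ∈ Icc (s (n+1)) (s (n+2)), y ∈ I := fun y hy =>
          hIccI (n+2) y ((hsI (n+1)).1.trans hy.1) hy.2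
        have hgy : ∀ y ∈ Icc (s (n+1)) (s (n+2)),
            g y ∈ I ∧ T (g y) = y ∧ s n ≤ g y ∧ g y ≤ s (n+1) := by
          intro y hy
          have hyI := hIccsub y hy
          have hcy : c ≤ y := by
            rw [← hT0c, ← hs1]
            exact (hsmono.monotone (by omega : 1 ≤ n+1)).trans hy.1
          obtain ⟨hgI, hgTy⟩ := hgspec y hcy hyI.2
          refine ⟨hgI, hgTy, ?_, ?_⟩
          · have : T (s n) ≤ T (g y) := by rw [hgTy, ← hssucc]; exact hy.1
            exact (hmono.le_iff_le (hsI n) hgI).1 this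
          · have : T (g y) ≤ T (s (n+1)) := by rw [hgTy, ← hssucc]; exact hy.2
            exact (hmono.le_iff_le hgI (hsI (n+1))).1 this
        have hgmonoOn : StrictMonoOn g (Icc (s (n+1)) (s (n+2))) := by
          intro y1 h1 y2 h2 hlt
          have hg1 := hgy y1 h1; have hg2 := hgy y2 h2
          have : T (g y1) < T (g y2) := by rw [hg1.2.1, hg2.2.1]; exact hlt
          exact (hmono.lt_iff_lt hg1.1 hg2.1).1 this
        have hgends1 : g (s (n+1)) = s n := by
          rw [hssucc]; exact hgT (s n) (hsI n)
        have hgends2 : g (s (n+2)) = s (n+1) := by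
          rw [hssucc]; exact hgT (s (n+1)) (hsI (n+1))
        have hgsur : Icc (g (s (n+1))) (g (s (n+2))) ⊆ g '' Icc (s (n+1)) (s (n+2)) := by
          rw [hgends1, hgends2]
          intro z hz
          have hzI : z ∈ I := hIccI (n+1) z ((hsI n).1.trans hz.1) hz.2
          refine ⟨T z, ⟨?_, ?_⟩, hgT z hzI⟩
          · rw [hssucc]; exact hmono.monotoneOn (hsI n) hzI hz.1
          · rw [hssucc]; exact hmono.monotoneOn hzI (hsI (n+1)) hz.2
        have hgcont : ContinuousOn g (Icc (s (n+1)) (s (n+2))) :=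
          mono_surj_contOn hpq hgmonoOn hgsur
        have hmt : MapsTo g (Icc (s (n+1)) (s (n+2))) (Icc 0 (s (n+1))) := by
          intro y hy
          obtain ⟨_, _, h3, h4⟩ := hgy y hy
          exact ⟨(hsI n).1.trans h3, h4⟩
        have hcomp : ContinuousOn (fun y => a (g y) + 1) (Icc (s (n+1)) (s (n+2))) :=
          (ih.comp hgcont hmt).add continuousOn_const
        have hpiece : ContinuousOn a (Icc (s (n+1)) (s (n+2))) := by
          refine hcomp.congr ?_
          intro y hy
          obtain ⟨hgI, hgTy, _, _⟩ := hgy y hy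
          have hkey : a (T (g y)) = a (g y) + 1 :=
            ha (g y) hgI (by rw [hgTy]; exact hIccsub y hy)
          rw [hgTy] at hkey
          exact hkey
        exact glue_Icc (hsI (n+1)).1 hpq ih hpiece
    intro x hx
    obtain ⟨n, hn⟩ := hcover x hx
    have h1 : ContinuousWithinAt a (Icc 0 (s (n+1))) x := hstep n x ⟨hx.1, hn.le⟩
    have h2 : ContinuousWithinAt a (I ∩ Iio (s (n+1))) x :=
      h1.mono (fun y hy => ⟨hy.1.1, hy.2.le⟩)
    exact (continuousWithinAt_inter (Iio_mem_nhds hn)).1 h2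
  refine ⟨⟨fun x => (N x : ℝ), ?_⟩, fun a₀ => ⟨hexists a₀, huniq a₀, hcontA a₀⟩⟩
  intro x hx hTx
  simp only
  rw [hNT x hx]
  push_cast
  ring
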